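/- In the Z-bialgebra K (words in {\bullet,\circ}, comultiplication res, counit \delta(a_\lambda) = (-1)^{\ell(\lambda)}, commutative multiplication m given by the ruffle rule), an element x is primitive (res(x) = x \otimes 1 + 1 \otimes x) if and only if x is a Z-linear combination of a_\bullet + 1 and a_\circ + 1. -/

import Mathlib

/-- A weight: a word in the two-letter alphabet `{•, ∘}` (encoded as `Bool`,
with `true = •` and `false = ∘`). -/
abbrev Word : Type := List Bool

/-- The Grothendieck group `K`: the free `ℤ`-module on the set of weights,
with basis `a_λ = Finsupp.single λ 1`. -/
abbrev K : Type := Word →₀ ℤ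

/-- The model of `K ⊗ K`: the free `ℤ`-module on pairs of weights, with
`a_λ ⊗ a_μ = Finsupp.single (λ, μ) 1`. -/
abbrev K2 : Type := Word × Word →₀ ℤ

/-- `res` on a basis element: `res(a_λ) = ∑_{i=0}^n a_{λ[1,i]} ⊗ a_{λ(i,n]}
+ ∑_{i=1}^n a_{λ[1,i)} ⊗ a_{λ(i,n]}` where `n = ℓ(λ)`. -/
noncomputable def resWord (w : Word) : K2 :=
  (∑ i ∈ Finset.range (w.length + 1), Finsupp.single (w.take i, w.drop i) 1)
    + ∑ i ∈ Finset.range w.length, Finsupp.single (w.take i, w.drop (i + 1)) 1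

/-- The restriction comultiplication `res : K → K ⊗ K`. -/
noncomputable def res : K →ₗ[ℤ] K2 :=
  Finsupp.lift K2 ℤ Word resWord

/-- The elementary tensor `x ⊗ y ∈ K ⊗ K` of `x, y ∈ K`. -/
noncomputable def tens (x y : K) : K2 :=
  x.sum fun a ca => y.sum fun b cb => Finsupp.single (a, b) (ca * cb)

/-- The unit `1 = a_∅ ∈ K`. -/
noncomputable def oneK : K := Finsupp.single ([] : Word) 1

lemma split1_iff (w μ ν : Word) (i : ℕ) (hi : i ≤ w.length) :
    (w.take i = μ ∧ w.drop i = ν) ↔ (i = μ.length ∧ w = μ ++ ν) := by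
  constructor
  · rintro ⟨h1, h2⟩
    have : i = μ.length := by rw [← h1, List.length_take]; omega
    exact ⟨this, by rw [← h1, ← h2, List.take_append_drop]⟩
  · rintro ⟨h1, h2⟩
    subst h1 h2
    exact ⟨List.take_left, by simpa using List.drop_append (l₁ := μ) (l₂ := ν) 0⟩

lemma split2_iff (w μ ν : Word) (i : ℕ) (hi : i < w.length) :
    (w.take i = μ ∧ w.drop (i + 1) = ν) ↔
      (i = μ.length ∧ (w = μ ++ true :: ν ∨ w = μ ++ false :: ν)) := by
  constructor
  · rintro ⟨h1, h2⟩
    have hl : i = μ.length := by rw [← h1, List.length_take]; omega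
    refine ⟨hl, ?_⟩
    have hw : w = μ ++ w[i] :: ν := by
      conv_lhs => rw [← List.take_append_drop i w]
      rw [h1, List.drop_eq_getElem_cons hi, h2]
    cases hb : w[i] <;> [right; left] <;> rwa [hb] at hw
  · rintro ⟨h1, h2⟩
    rcases h2 with h2 | h2 <;> subst h1 h2 <;>
      exact ⟨List.take_left, by simpa using List.drop_append (l₁ := μ) 1⟩

lemma sum_ind (s : Finset ℕ) (a : ℕ) (P : Prop) [Decidable P] (ha : P → a ∈ s) :
    (∑ i ∈ s, if i = a ∧ P then (1:ℤ) else 0) = if P then 1 else 0 := by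
  by_cases hP : P
  · simp only [hP, and_true]
    rw [Finset.sum_ite_eq' s a (fun _ => (1:ℤ)), if_pos (ha hP)]
    simp [hP]
  · simp [hP]

lemma resWord_apply (w μ ν : Word) : resWord w (μ, ν) =
    (if w = μ ++ ν then 1 else 0) + ((if w = μ ++ true :: ν then 1 else 0)
      + (if w = μ ++ false :: ν then 1 else 0)) := by
  rw [resWord, Finsupp.add_apply, Finsupp.finset_sum_apply, Finsupp.finset_sum_apply]
  simp only [Finsupp.single_apply, Prod.mk.injEq]
  have e1 : ∀ i ∈ Finset.range (w.length + 1),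
      (if (w.take i = μ ∧ w.drop i = ν) then (1:ℤ) else 0)
        = if (i = μ.length ∧ w = μ ++ ν) then 1 else 0 := fun i hi => by
    simp only [split1_iff w μ ν i (Nat.lt_succ_iff.mp (Finset.mem_range.mp hi))]
  have e2 : ∀ i ∈ Finset.range w.length,
      (if (w.take i = μ ∧ w.drop (i+1) = ν) then (1:ℤ) else 0)
        = (if (i = μ.length ∧ w = μ ++ true :: ν) then 1 else 0)
          + (if (i = μ.length ∧ w = μ ++ false :: ν) then 1 else 0) := fun i hi => by
    have hne : ¬ (w = μ ++ true :: ν ∧ w = μ ++ false :: ν) := by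
      rintro ⟨ha, hb⟩; rw [ha] at hb; simp at hb
    simp only [split2_iff w μ ν i (Finset.mem_range.mp hi)]
    by_cases h1 : i = μ.length <;> by_cases h2 : w = μ ++ true :: ν <;>
      by_cases h3 : w = μ ++ false :: ν <;> simp_all
  rw [Finset.sum_congr rfl e1, Finset.sum_congr rfl e2, Finset.sum_add_distrib,
    sum_ind _ _ _ (fun h => by simp [h, Finset.mem_range]),
    sum_ind _ _ _ (fun h => by simp [h, Finset.mem_range]),
    sum_ind _ _ _ (fun h => by simp [h, Finset.mem_range])]


lemma sum_single_ind (x : K) (a : Word) :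
    (x.sum fun w c => if w = a then c else 0) = x a := by
  rw [Finsupp.sum]
  rw [Finset.sum_eq_single a (fun b _ hb => if_neg hb) (fun h => by simp [Finsupp.notMem_support_iff.mp h])]
  simp

lemma res_apply (x : K) (μ ν : Word) :
    res x (μ, ν) = x (μ ++ ν) + (x (μ ++ true :: ν) + x (μ ++ false :: ν)) := by
  rw [res, Finsupp.lift_apply, Finsupp.sum_apply]
  have : ∀ w : Word, ∀ c : ℤ, (c • resWord w) (μ, ν) =
      (if w = μ ++ ν then c else 0) + ((if w = μ ++ true :: ν then c else 0)
        + (if w = μ ++ false :: ν then c else 0)) := by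
    intro w c
    rw [Finsupp.smul_apply, resWord_apply, smul_eq_mul]
    ring_nf
    split_ifs <;> ring
  rw [Finsupp.sum_congr (g2 := fun w c => (if w = μ ++ ν then c else 0)
      + ((if w = μ ++ true :: ν then c else 0) + (if w = μ ++ false :: ν then c else 0)))
    (fun w _ => this w (x w))]
  rw [Finsupp.sum_add, Finsupp.sum_add, sum_single_ind, sum_single_ind, sum_single_ind]

lemma tens_oneK_apply (x : K) (μ ν : Word) :
    tens x oneK (μ, ν) = if ν = [] then x μ else 0 := by
  rw [tens, oneK]
  have h1 : ∀ a : Word, ∀ ca : ℤ,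
      ((Finsupp.single ([] : Word) (1:ℤ)).sum fun b cb => Finsupp.single (a, b) (ca * cb))
        = Finsupp.single (a, ([] : Word)) ca := by
    intro a ca
    rw [Finsupp.sum_single_index (by simp)]
    simp
  rw [Finsupp.sum_congr (g2 := fun a ca => Finsupp.single (a, ([] : Word)) ca)
    (fun a _ => h1 a (x a)), Finsupp.sum_apply]
  simp only [Finsupp.single_apply, Prod.mk.injEq]
  by_cases hν : ν = []
  · subst hν
    simp only [eq_self_iff_true, and_true, if_true]
    exact sum_single_ind x μ
  · rw [if_neg hν]
    rw [Finsupp.sum, Finset.sum_eq_zero]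
    intro a _
    simp [Ne.symm hν]

lemma oneK_tens_apply (x : K) (μ ν : Word) :
    tens oneK x (μ, ν) = if μ = [] then x ν else 0 := by
  rw [tens, oneK]
  rw [Finsupp.sum_single_index (by simp [Finsupp.sum])]
  simp only [one_mul]
  rw [Finsupp.sum_apply]
  simp only [Finsupp.single_apply, Prod.mk.injEq]
  by_cases hμ : μ = []
  · subst hμ
    simp only [eq_self_iff_true, true_and, if_true]
    exact sum_single_ind x ν
  · rw [if_neg hμ]
    rw [Finsupp.sum, Finset.sum_eq_zero]
    intro a _
    simp [Ne.symm hμ]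

lemma primitive_pointwise (x : K) : (res x = tens x oneK + tens oneK x) ↔
    ∀ μ ν : Word, x (μ ++ ν) + (x (μ ++ true :: ν) + x (μ ++ false :: ν))
      = (if ν = [] then x μ else 0) + (if μ = [] then x ν else 0) := by
  constructor
  · intro h μ ν
    have := congrArg (fun f : K2 => f (μ, ν)) h
    simpa only [res_apply, Finsupp.add_apply, tens_oneK_apply, oneK_tens_apply] using this
  · intro h
    ext p
    obtain ⟨μ, ν⟩ := p
    rw [Finsupp.add_apply, res_apply, tens_oneK_apply, oneK_tens_apply]
    exact h μ ν

lemma exists_bound (x : K) : ∃ N, ∀ w : Word, N ≤ w.length → x w = 0 := by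
  refine ⟨(x.support.sup List.length) + 1, fun w hw => ?_⟩
  by_contra h
  have hm : w ∈ x.support := Finsupp.mem_support_iff.mpr h
  have := Finset.le_sup (f := List.length) hm
  omega

/-- An element `x ∈ K` is primitive, i.e. `res(x) = x ⊗ 1 + 1 ⊗ x`, if and only if it is a
`ℤ`-linear combination of `a_• + 1` and `a_∘ + 1`. -/
theorem primitive_iff : ∀ x : K,
    res x = tens x oneK + tens oneK x ↔
      ∃ p q : ℤ, x = p • (Finsupp.single [true] 1 + oneK)
        + q • (Finsupp.single [false] 1 + oneK) := by
  intro x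
  rw [primitive_pointwise]
  constructor
  · intro h
    obtain ⟨N, hN⟩ := exists_bound x
    have hk : ∀ k, ∀ w : Word, 2 ≤ w.length → N ≤ w.length + k → x w = 0 := by
      intro k
      induction k with
      | zero => exact fun w _ hn => hN w (by omega)
      | succ k ih =>
        intro w h2 hn
        match w with
        | a :: b :: t =>
          have he := h [a] (b :: t)
          simp only [List.cons_append, List.nil_append, reduceCtorEq, if_false,
            List.cons_ne_nil] at he
          have z1 : x (a :: true :: b :: t) = 0 := ih _ (by simp) (by simp at hn ⊢; omega)
          have z2 : x (a :: false :: b :: t) = 0 := ih _ (by simp) (by simp at hn ⊢; omega)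
          rw [z1, z2] at he
          simpa using he
    have hzero : ∀ w : Word, 2 ≤ w.length → x w = 0 := fun w h2 => hk N w h2 (by omega)
    have h00 := h [] []
    simp only [List.nil_append, if_true, eq_self_iff_true] at h00
    refine ⟨x [true], x [false], ?_⟩
    ext w
    simp only [Finsupp.add_apply, Finsupp.smul_apply, Finsupp.single_apply, smul_eq_mul, oneK]
    match w with
    | [] => simp; linarith
    | [true] => simp
    | [false] => simp
    | a :: b :: t =>
      rw [hzero (a :: b :: t) (by simp)]
      simp
  · rintro ⟨p, q, hx⟩ μ ν
    have hx' : ∀ w : Word, x w =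
        p * ((if [true] = w then (1:ℤ) else 0) + (if w = [] then 1 else 0))
          + q * ((if [false] = w then (1:ℤ) else 0) + (if w = [] then 1 else 0)) := by
      intro w
      rw [hx]
      simp [oneK, Finsupp.single_apply, mul_add, mul_ite]
    rcases μ with _ | ⟨a, m⟩ <;> rcases ν with _ | ⟨b, l⟩ <;>
        simp only [hx', List.nil_append, List.cons_append, List.append_nil] <;>
      simp <;> ring
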